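/- Let s ≥ 2 and r be natural numbers with 2r > s, let κ : Fin (s−1) → ℕ, set m_a = κ_a·r + 1 for a = 1,…,s−1, m_s = 2r − s, n = Σ_{a=1}^{s} m_a, and define ν_1,…,ν_{n+s} ∈ ℤ^n as follows: ν_i = e_i for 1 ≤ i ≤ n, ν_{n+1} = (−1,…,−1), and ν_{n+1+a} = Σ_{i ∈ 𝔐_a} e_i for a = 1,…,s−1, where 𝔐_1,…,𝔐_s are the consecutive blocks of {1,…,n} of sizes m_1,…,m_s. Let φ : {1,…,n+s} → Fin r be any function whose restriction to the last 2r indices {n+s+1−2r,…,n+s} has every fiber of cardinality exactly 2. Define lifted vectors in ℤ^r ⊕ ℤ^n by ν̃_α = (e_α, 0) for α ∈ Fin r and ν̃_{r+i} = (e_{φ(i)}, ν_i) for i = 1,…,n+s. Then 2·Σ_{α ∈ Fin r} ν̃_α = Σ_{i=n+s+1−2r}^{n+s} ν̃_{r+i}. -/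

import Mathlib

open Finset

/-- The starting position (0-based) of the `a`-th consecutive block of sizes `m`. -/
def blockOffset {s : ℕ} (m : Fin s → ℕ) (a : Fin s) : ℕ :=
  ∑ b ∈ Finset.Iio a, m b

/-- The `a`-th consecutive block `𝔐_a` of `{0, …, n-1}`, of size `m a`
(provided `n = ∑ a, m a`). -/
def block {s : ℕ} (n : ℕ) (m : Fin s → ℕ) (a : Fin s) : Finset (Fin n) :=
  Finset.univ.filter fun i => blockOffset m a ≤ i.val ∧ i.val < blockOffset m a + m a

lemma blockOffset_succ {s : ℕ} (m : Fin s → ℕ) (a : Fin s) (h : a.val + 1 < s) :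
    blockOffset m ⟨a.val + 1, h⟩ = blockOffset m a + m a := by
  have h1 : Finset.Iio (⟨a.val + 1, h⟩ : Fin s) = insert a (Finset.Iio a) := by
    ext c; simp [Fin.lt_def, Fin.ext_iff]
  rw [blockOffset, h1, Finset.sum_insert (by simp), blockOffset]; ring

lemma blockOffset_add_le {s : ℕ} (m : Fin s → ℕ) {a b : Fin s} (hab : a < b) :
    blockOffset m a + m a ≤ blockOffset m b := by
  have h1 : insert a (Finset.Iio a) = Finset.Iic a := Finset.Iio_insert a
  have h2 : Finset.Iic a ⊆ Finset.Iio b := fun c hc =>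
    Finset.mem_Iio.mpr (lt_of_le_of_lt (Finset.mem_Iic.mp hc) hab)
  calc blockOffset m a + m a = ∑ c ∈ Finset.Iic a, m c := by
        rw [← h1, Finset.sum_insert (by simp), blockOffset]; ring
    _ ≤ _ := Finset.sum_le_sum_of_subset h2

lemma blockOffset_last_add {s n : ℕ} (m : Fin (s+1) → ℕ) (hn : n = ∑ a, m a) :
    blockOffset m (Fin.last s) + m (Fin.last s) = n := by
  have h1 : insert (Fin.last s) (Finset.Iio (Fin.last s)) = Finset.univ := by
    rw [Finset.Iio_insert]; ext c; simp [Fin.le_last]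
  rw [hn, ← h1, Finset.sum_insert (fun h => absurd (Finset.mem_Iio.mp h) (lt_irrefl _)), blockOffset]; ring

lemma existsUnique_block {s n : ℕ} (m : Fin (s+1) → ℕ) (hn : n = ∑ a, m a) (j : Fin n) :
    ∃! a, j ∈ block n m a := by
  have hmem : ∀ a, j ∈ block n m a ↔ blockOffset m a ≤ j.val ∧ j.val < blockOffset m a + m a := by
    intro a; simp [block]
  set S : Finset (Fin (s+1)) := Finset.univ.filter (fun a => blockOffset m a ≤ j.val) with hS
  have hIio0 : Finset.Iio (0 : Fin (s+1)) = ∅ := by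
    ext c; simp [Fin.lt_def]
  have h0 : (0 : Fin (s+1)) ∈ S := by
    rw [hS, Finset.mem_filter, blockOffset, hIio0]; simp
  have hne : S.Nonempty := ⟨0, h0⟩
  set a := S.max' hne with ha
  have haj : blockOffset m a ≤ j.val := by
    have := S.max'_mem hne
    simpa [hS] using this
  have hup : j.val < blockOffset m a + m a := by
    by_cases hlast : a = Fin.last s
    · rw [hlast, blockOffset_last_add m hn]
      exact j.isLt
    · have hv : a.val + 1 < s + 1 := by
        have := a.isLt
        have : a.val ≠ s := fun h => hlast (Fin.ext h)
        omega
      have haa' : a < ⟨a.val + 1, hv⟩ := by simp [Fin.lt_def]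
      have hnotS : (⟨a.val + 1, hv⟩ : Fin (s+1)) ∉ S :=
        fun hmem' => absurd (S.le_max' _ hmem') (not_le.mpr haa')
      have h2 : ¬ (blockOffset m ⟨a.val + 1, hv⟩ ≤ j.val) := by simpa [hS] using hnotS
      rw [blockOffset_succ m a hv] at h2
      omega
  refine ⟨a, (hmem a).mpr ⟨haj, hup⟩, ?_⟩
  intro b hb
  rw [hmem b] at hb
  rcases lt_trichotomy b a with h | h | h
  · have := blockOffset_add_le m h
    omega
  · exact h
  · have := blockOffset_add_le m h
    omega

lemma sum_block_indicator {s n : ℕ} (m : Fin (s+1) → ℕ) (hn : n = ∑ a, m a) (j : Fin n) :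
    ∑ a : Fin (s+1), (if j ∈ block n m a then (1:ℤ) else 0) = 1 := by
  obtain ⟨a, ha, hu⟩ := existsUnique_block m hn j
  have h : ∀ a', (j ∈ block n m a') ↔ (a' = a) :=
    fun a' => ⟨fun h => hu a' h, fun h => h ▸ ha⟩
  simp [h]

theorem stmt6 (s r n : ℕ) (hs : 2 ≤ s) (hr : s < 2 * r)
    (κ : Fin (s - 1) → ℕ) (m : Fin s → ℕ)
    (hm1 : ∀ a : Fin (s - 1), m (Fin.castLE (Nat.sub_le s 1) a) = κ a * r + 1)
    (hm2 : m ⟨s - 1, by omega⟩ = 2 * r - s)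
    (hn : n = ∑ a, m a)
    -- the vectors ν_1, …, ν_{n+s} ∈ ℤ^n (0-based: ν 0, …, ν (n+s-1))
    (ν : Fin (n + s) → Fin n → ℤ)
    (hν1 : ∀ i : Fin (n + s), ∀ h : i.val < n, ν i = Pi.single ⟨i.val, h⟩ 1)
    (hν2 : ν ⟨n, by omega⟩ = fun _ => -1)
    (hν3 : ∀ a : Fin (s - 1),
      ν ⟨n + 1 + a.val, by have := a.isLt; omega⟩ =
        ∑ i ∈ block n m (Fin.castLE (Nat.sub_le s 1) a), Pi.single i 1)
    -- the nef-partition assignment φ, pairwise on the last 2r indices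
    (φ : Fin (n + s) → Fin r)
    (hφ : ∀ β : Fin r,
      (Finset.univ.filter fun i : Fin (n + s) => n + s - 2 * r ≤ i.val ∧ φ i = β).card = 2) :
    -- `2 · Σ_{α} ν̃_α = Σ_{i = n+s+1-2r}^{n+s} ν̃_{r+i}` in `ℤ^r ⊕ ℤ^n`
    (2 : ℤ) • (∑ α : Fin r, ((Pi.single α 1 : Fin r → ℤ), (0 : Fin n → ℤ))) =
      ∑ i ∈ Finset.univ.filter (fun i : Fin (n + s) => n + s - 2 * r ≤ i.val),
        ((Pi.single (φ i) 1 : Fin r → ℤ), ν i) := by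
  obtain ⟨k, rfl⟩ : ∃ k, s = k + 1 := ⟨s - 1, by omega⟩
  have hml : m (Fin.last k) = 2 * r - (k + 1) := hm2
  have hmn : m (Fin.last k) ≤ n := by
    rw [hn]; exact Finset.single_le_sum (fun i _ => Nat.zero_le _) (Finset.mem_univ _)
  have hBl := blockOffset_last_add m hn
  have hB : blockOffset m (Fin.last k) = n + (k + 1) - 2 * r := by omega
  refine Prod.ext ?_ ?_
  · -- first components
    simp only [Prod.smul_fst, Prod.fst_sum]
    funext β
    have h2 := hφ β
    simp only [Finset.sum_apply, Pi.smul_apply, Pi.single_apply, smul_eq_mul]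
    rw [Finset.sum_ite_eq]
    have hfil : (Finset.univ.filter fun i : Fin (n + (k+1)) => n + (k+1) - 2*r ≤ i.val).filter
        (fun i => β = φ i) =
        Finset.univ.filter fun i : Fin (n + (k+1)) => n + (k+1) - 2*r ≤ i.val ∧ φ i = β := by
      rw [Finset.filter_filter]
      exact Finset.filter_congr fun i _ => and_congr_right fun _ => eq_comm
    rw [Finset.sum_boole, hfil, h2]
    simp
  · -- second components
    simp only [Prod.smul_snd, Prod.snd_sum, smul_zero]
    funext j
    rw [Finset.sum_apply]
    rw [Finset.sum_filter, Fin.sum_univ_add]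
    have hS1 : (∑ i : Fin n, if n + (k+1) - 2*r ≤ (Fin.castAdd (k+1) i).val
          then ν (Fin.castAdd (k+1) i) j else 0) =
        if n + (k+1) - 2*r ≤ j.val then (1:ℤ) else 0 := by
      rw [Finset.sum_eq_single j]
      · rw [hν1 (Fin.castAdd (k+1) j) (by simpa using j.isLt)]
        simp [Pi.single_apply]
      · intro i _ hij
        rw [hν1 (Fin.castAdd (k+1) i) (by simpa using i.isLt)]
        have : (Pi.single (⟨(Fin.castAdd (k+1) i).val, by simpa using i.isLt⟩ : Fin n) (1:ℤ) :
            Fin n → ℤ) j = 0 := by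
          apply Pi.single_eq_of_ne
          simp [Fin.ext_iff]
          exact fun h => hij (Fin.ext h.symm)
        rw [this, ite_self]
      · simp
    rw [hS1, Fin.sum_univ_succ]
    have h0eq : Fin.natAdd n (0 : Fin (k+1)) = (⟨n, by omega⟩ : Fin (n + (k+1))) := by
      ext; simp
    have hν2' : ν (Fin.natAdd n (0 : Fin (k+1))) = fun _ => (-1:ℤ) := by rw [h0eq]; exact hν2
    rw [if_pos (show n + (k+1) - 2*r ≤ (Fin.natAdd n (0 : Fin (k+1))).val by simp; omega), hν2']
    have hbeta : ((fun _ : Fin n => (-1:ℤ)) j) = -1 := rfl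
    have hsucc : ∀ a : Fin k,
        (if n + (k+1) - 2*r ≤ (Fin.natAdd n (Fin.succ a)).val
          then ν (Fin.natAdd n (Fin.succ a)) j else 0) =
        if j ∈ block n m (Fin.castLE (Nat.sub_le (k+1) 1) a) then (1:ℤ) else 0 := by
      intro a
      have heq : Fin.natAdd n (Fin.succ a) =
          (⟨n + 1 + a.val, by have := a.isLt; omega⟩ : Fin (n + (k+1))) := by
        ext; simp; omega
      rw [if_pos (show n + (k+1) - 2*r ≤ (Fin.natAdd n (Fin.succ a)).val by simp; omega),
        heq, hν3 a, Finset.sum_apply]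
      simp only [Pi.single_apply]
      rw [Finset.sum_ite_eq]
    rw [Finset.sum_congr rfl (fun a _ => hsucc a)]
    have hpart := sum_block_indicator m hn j
    rw [Fin.sum_univ_castSucc] at hpart
    have hcs : ∀ a : Fin k, (Fin.castSucc a : Fin (k+1)) = Fin.castLE (Nat.sub_le (k+1) 1) a :=
      fun a => rfl
    simp only [hcs] at hpart
    have hlastmem : (j ∈ block n m (Fin.last k)) ↔ n + (k+1) - 2*r ≤ j.val := by
      simp only [block, Finset.mem_filter, Finset.mem_univ, true_and, hB]
      constructor
      · exact fun h => h.1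
      · intro h
        refine ⟨h, ?_⟩
        have := j.isLt
        omega
    simp only [hbeta, Finset.sum_const_zero, smul_zero, Pi.zero_apply]
    by_cases hc : n + (k+1) - 2*r ≤ j.val
    · rw [if_pos hc]
      rw [if_pos (hlastmem.mpr hc)] at hpart
      linarith
    · rw [if_neg hc]
      rw [if_neg (fun h => hc (hlastmem.mp h))] at hpart
      linarith
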